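/- The following equality holds in [0,∞]: Σ_{n=0}^∞ ( ∫_{(n,n+2)} μ(x) dx · ∫_{(n,n+2)} μ(x)⁻¹ dx − 4 ) = (1/2) Σ_{n=0}^∞ Σ_{(σ,ξ) ∈ M × M, σ ≠ ξ} |I_σ^n| |I_ξ^n| (σ − ξ)²/(σ ξ), where each summand on the left-hand side is nonnegative. -/

import Mathlib

open MeasureTheory
open scoped ENNReal Classical

/-- Key regrouping lemma: a sum over the (subtype of the) range of `f`,
weighted by grouped coefficients, equals the ungrouped sum. -/
lemma tsum_range_key (f : ℕ → ℝ) (a : ℕ → ℝ≥0∞) (H : ℝ → ℝ≥0∞) :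
    (∑' σ : (Set.range f), (∑' k, if f k = (σ : ℝ) then a k else 0) * H (σ : ℝ))
      = ∑' k, a k * H (f k) := by
  have h1 : ∀ σ : (Set.range f),
      (∑' k, if f k = (σ : ℝ) then a k else 0) * H (σ : ℝ)
        = ∑' k, (if f k = (σ : ℝ) then a k * H (σ : ℝ) else 0) := by
    intro σ
    rw [← ENNReal.tsum_mul_right]
    exact tsum_congr fun k => by split_ifs <;> simp
  rw [tsum_congr h1, ENNReal.tsum_comm]
  refine tsum_congr fun k => ?_
  have h2 : ∀ σ : (Set.range f), σ ≠ ⟨f k, ⟨k, rfl⟩⟩ →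
      (if f k = (σ : ℝ) then a k * H (σ : ℝ) else 0) = 0 := by
    intro σ hσ
    rw [if_neg]
    intro h
    exact hσ (Subtype.ext h.symm)
  rw [tsum_eq_single _ h2]
  simp

/-- Lemma 9.4.  With `M = {sₖsₖ₊₁ : k ∈ ℕ}` and
`|I_σⁿ| = |{x ∈ (n,n+2) : μ(x) = σ}|`, one has, in `[0,∞]`,
`Σₙ (∫ₙ^{n+2} μ · ∫ₙ^{n+2} 1/μ − 4)
  = ½ Σₙ Σ_{σ≠ξ ∈ M} |I_σⁿ||I_ξⁿ| (σ−ξ)²/(σξ)`,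
each summand on the left being `≥ 4`-bounded below, i.e. nonnegative. -/
theorem bessonov_denisov_sum_identity (s : ℕ → ℕ) (hs : ∀ n, 1 ≤ s n)
    (ℓ : ℕ → ℝ) (hℓ : ∀ n, 0 < ℓ n)
    (t : ℕ → ℝ) (ht0 : t 0 = 0) (htrec : ∀ n, t (n + 1) = t n + ℓ n)
    (hL : (∑' n : ℕ, ENNReal.ofReal (ℓ n)) = ∞)
    (μ : ℝ → ℝ)
    (hμ : ∀ n : ℕ, ∀ x ∈ Set.Ico (t n) (t (n + 1)), μ x = (s n : ℝ) * (s (n + 1) : ℝ))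
    (hμneg : ∀ x : ℝ, x < 0 → μ x = 1) :
    (∀ n : ℕ, 4 ≤
      (∫⁻ x in Set.Ioo (n : ℝ) (n + 2), ENNReal.ofReal (μ x)) *
        ∫⁻ x in Set.Ioo (n : ℝ) (n + 2), ENNReal.ofReal ((μ x)⁻¹)) ∧
    (∑' n : ℕ,
      ((∫⁻ x in Set.Ioo (n : ℝ) (n + 2), ENNReal.ofReal (μ x)) *
          (∫⁻ x in Set.Ioo (n : ℝ) (n + 2), ENNReal.ofReal ((μ x)⁻¹)) - 4)) =
    (1 / 2 : ℝ≥0∞) *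
      ∑' n : ℕ,
        ∑' σ : (Set.range fun k : ℕ => (s k : ℝ) * (s (k + 1) : ℝ)),
          ∑' ξ : (Set.range fun k : ℕ => (s k : ℝ) * (s (k + 1) : ℝ)),
            if (σ : ℝ) ≠ (ξ : ℝ) then
              volume {x ∈ Set.Ioo (n : ℝ) (n + 2) | μ x = (σ : ℝ)} *
                volume {x ∈ Set.Ioo (n : ℝ) (n + 2) | μ x = (ξ : ℝ)} *
                ENNReal.ofReal (((σ : ℝ) - (ξ : ℝ)) ^ 2 / ((σ : ℝ) * (ξ : ℝ)))
            else 0 := by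
  classical
  set σf : ℕ → ℝ := fun k : ℕ => (s k : ℝ) * (s (k + 1) : ℝ) with hσf
  have hσpos : ∀ k, (0 : ℝ) < σf k := fun k =>
    mul_pos (by exact_mod_cast hs k) (by exact_mod_cast hs (k + 1))
  -- basic facts about t
  have hmono : Monotone t := monotone_nat_of_le_succ fun k => by
    rw [htrec k]; linarith [hℓ k]
  have htsum : ∀ m, t m = ∑ i ∈ Finset.range m, ℓ i := by
    intro m
    induction m with
    | zero => simpa using ht0
    | succ m ih => rw [htrec m, ih, Finset.sum_range_succ]
  have hunb : ∀ x : ℝ, ∃ m, x < t m := by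
    intro x
    by_contra h
    push_neg at h
    have hle : (∑' n : ℕ, ENNReal.ofReal (ℓ n)) ≤ ENNReal.ofReal x := by
      rw [ENNReal.tsum_eq_iSup_sum]
      refine iSup_le fun F => ?_
      obtain ⟨m, hFm⟩ : ∃ m, F ⊆ Finset.range m :=
        ⟨(F.sup id) + 1, fun i hi => Finset.mem_range.mpr
          (Nat.lt_succ_of_le (Finset.le_sup (f := id) hi))⟩
      calc ∑ i ∈ F, ENNReal.ofReal (ℓ i)
          ≤ ∑ i ∈ Finset.range m, ENNReal.ofReal (ℓ i) :=
            Finset.sum_le_sum_of_subset hFm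
        _ = ENNReal.ofReal (∑ i ∈ Finset.range m, ℓ i) :=
            (ENNReal.ofReal_sum_of_nonneg fun i _ => (hℓ i).le).symm
        _ = ENNReal.ofReal (t m) := by rw [← htsum m]
        _ ≤ ENNReal.ofReal x := ENNReal.ofReal_le_ofReal (h m)
    rw [hL, top_le_iff] at hle
    exact ENNReal.ofReal_ne_top hle
  have hcover : ∀ x : ℝ, 0 ≤ x → ∃ k, t k ≤ x ∧ x < t (k + 1) := by
    intro x hx
    have hex : ∃ m, x < t m := hunb x
    have hspec : x < t (Nat.find hex) := Nat.find_spec hex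
    have hpos : Nat.find hex ≠ 0 := by
      intro h
      rw [h, ht0] at hspec
      linarith
    obtain ⟨k, hk⟩ := Nat.exists_eq_succ_of_ne_zero hpos
    have hk1 : x < t (k + 1) := by rw [hk] at hspec; exact hspec
    refine ⟨k, ?_, hk1⟩
    by_contra hlt
    push_neg at hlt
    exact Nat.find_min hex (hk ▸ Nat.lt_succ_self k) hlt
  -- real/ENNReal pointwise identities
  have hre : ∀ k j : ℕ, σf k / σf j + σf j / σf k
      = 2 + (σf k - σf j) ^ 2 / (σf k * σf j) := by
    intro k j
    have hk := (hσpos k).ne'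
    have hj := (hσpos j).ne'
    field_simp
    ring
  have hofr : ∀ k j : ℕ, ENNReal.ofReal (σf k / σf j) + ENNReal.ofReal (σf j / σf k)
      = 2 + (if σf k ≠ σf j then
          ENNReal.ofReal ((σf k - σf j) ^ 2 / (σf k * σf j)) else 0) := by
    intro k j
    rw [← ENNReal.ofReal_add (div_nonneg (hσpos k).le (hσpos j).le)
        (div_nonneg (hσpos j).le (hσpos k).le), hre k j,
      ENNReal.ofReal_add (by norm_num)
        (div_nonneg (sq_nonneg _) (mul_pos (hσpos k) (hσpos j)).le)]
    congr 1
    · norm_num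
    · split_ifs with h
      · rfl
      · push_neg at h
        rw [h]
        simp
  -- the main per-n identity
  have main : ∀ n : ℕ,
      ((∫⁻ x in Set.Ioo (n : ℝ) (n + 2), ENNReal.ofReal (μ x)) *
          ∫⁻ x in Set.Ioo (n : ℝ) (n + 2), ENNReal.ofReal ((μ x)⁻¹)) =
        4 + (1 / 2 : ℝ≥0∞) *
          ∑' σ : (Set.range σf), ∑' ξ : (Set.range σf),
            if (σ : ℝ) ≠ (ξ : ℝ) then
              volume {x ∈ Set.Ioo (n : ℝ) (n + 2) | μ x = (σ : ℝ)} *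
                volume {x ∈ Set.Ioo (n : ℝ) (n + 2) | μ x = (ξ : ℝ)} *
                ENNReal.ofReal (((σ : ℝ) - (ξ : ℝ)) ^ 2 / ((σ : ℝ) * (ξ : ℝ)))
            else 0 := by
    intro n
    set I : Set ℝ := Set.Ioo (n : ℝ) (n + 2) with hIdef
    set A : ℕ → Set ℝ := fun k => I ∩ Set.Ico (t k) (t (k + 1)) with hAdef
    set a : ℕ → ℝ≥0∞ := fun k => volume (A k) with hadef
    have hAmeas : ∀ k, MeasurableSet (A k) := fun k =>
      measurableSet_Ioo.inter measurableSet_Ico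
    have hAdisj : Pairwise (Function.onFun Disjoint A) := by
      have hd : ∀ k j, k < j → Disjoint (A k) (A j) := by
        intro k j hkj
        refine Set.disjoint_left.mpr fun x hx hx' => ?_
        have h1 : x < t (k + 1) := hx.2.2
        have h2 : t j ≤ x := hx'.2.1
        have h3 : t (k + 1) ≤ t j := hmono hkj
        linarith
      intro k j hkj
      rcases Ne.lt_or_gt hkj with h | h
      · exact hd k j h
      · exact (hd j k h).symm
    have hAunion : (⋃ k, A k) = I := by
      apply Set.Subset.antisymm
      · exact Set.iUnion_subset fun k => Set.inter_subset_left
      · intro x hx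
        have hx0 : (0 : ℝ) ≤ x := le_of_lt (lt_of_le_of_lt (Nat.cast_nonneg n) hx.1)
        obtain ⟨k, hk1, hk2⟩ := hcover x hx0
        exact Set.mem_iUnion.mpr ⟨k, hx, hk1, hk2⟩
    have hAval : ∀ k, ∀ x ∈ A k, μ x = σf k := fun k x hx => hμ k x hx.2
    have hasum : (∑' k, a k) = 2 := by
      calc (∑' k, a k) = volume (⋃ k, A k) := (measure_iUnion hAdisj hAmeas).symm
        _ = volume I := by rw [hAunion]
        _ = 2 := by
            rw [hIdef, Real.volume_Ioo]
            norm_num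
    -- integrals as sums
    have hint1 : (∫⁻ x in I, ENNReal.ofReal (μ x))
        = ∑' k, a k * ENNReal.ofReal (σf k) := by
      rw [← hAunion, lintegral_iUnion hAmeas hAdisj]
      refine tsum_congr fun k => ?_
      rw [setLIntegral_congr_fun (hAmeas k)
        (fun x hx => by rw [hAval k x hx]), setLIntegral_const, mul_comm]
    have hint2 : (∫⁻ x in I, ENNReal.ofReal ((μ x)⁻¹))
        = ∑' k, a k * ENNReal.ofReal ((σf k)⁻¹) := by
      rw [← hAunion, lintegral_iUnion hAmeas hAdisj]
      refine tsum_congr fun k => ?_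
      rw [setLIntegral_congr_fun (hAmeas k)
        (fun x hx => by rw [hAval k x hx]), setLIntegral_const, mul_comm]
    -- computing volumes of level sets
    have hvol : ∀ v : ℝ, volume {x ∈ I | μ x = v}
        = ∑' k, if σf k = v then a k else 0 := by
      intro v
      have hBset : ∀ k, (A k ∩ {x | μ x = v}) = if σf k = v then A k else ∅ := by
        intro k
        split_ifs with h
        · ext x
          exact ⟨fun hx => hx.1, fun hx => ⟨hx, by
            rw [Set.mem_setOf_eq, hAval k x hx, h]⟩⟩
        · ext x
          simp only [Set.mem_inter_iff, Set.mem_setOf_eq, Set.mem_empty_iff_false,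
            iff_false, not_and]
          intro hx hv
          exact h (by rw [hAval k x hx] at hv; exact hv)
      have hmeas' : ∀ k, MeasurableSet (A k ∩ {x | μ x = v}) := by
        intro k
        rw [hBset k]
        split_ifs
        · exact hAmeas _
        · exact MeasurableSet.empty
      have hdisj' : Pairwise (Function.onFun Disjoint fun k => A k ∩ {x | μ x = v}) :=
        fun k j h => (hAdisj h).mono Set.inter_subset_left Set.inter_subset_left
      have hIeq : {x ∈ I | μ x = v} = ⋃ k, (A k ∩ {x | μ x = v}) := by
        rw [← Set.iUnion_inter, hAunion]
        rfl
      rw [hIeq, measure_iUnion hdisj' hmeas']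
      refine tsum_congr fun k => ?_
      rw [hBset k]
      split_ifs
      · rfl
      · simp
    -- the product as a double sum
    set X : ℝ≥0∞ := ∑' k, ∑' j, (a k * a j) * ENNReal.ofReal (σf k / σf j) with hXdef
    set W : ℝ≥0∞ := ∑' k, ∑' j, (a k * a j) *
      (if σf k ≠ σf j then
        ENNReal.ofReal ((σf k - σf j) ^ 2 / (σf k * σf j)) else 0) with hWdef
    have hprod : ((∑' k, a k * ENNReal.ofReal (σf k)) *
        ∑' j, a j * ENNReal.ofReal ((σf j)⁻¹)) = X := by
      rw [hXdef, ← ENNReal.tsum_mul_right]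
      refine tsum_congr fun k => ?_
      rw [← ENNReal.tsum_mul_left]
      refine tsum_congr fun j => ?_
      rw [div_eq_mul_inv, ENNReal.ofReal_mul (hσpos k).le]
      ring
    have hDD : (∑' (k : ℕ), ∑' (j : ℕ), a k * a j) = 4 := by
      have h1 : ∀ k, (∑' j, a k * a j) = a k * 2 := fun k => by
        rw [ENNReal.tsum_mul_left, hasum]
      rw [tsum_congr h1, ENNReal.tsum_mul_right, hasum]
      norm_num
    have h8 : (∑' (k : ℕ), ∑' (j : ℕ), 2 * (a k * a j)) = 8 := by
      calc (∑' (k : ℕ), ∑' (j : ℕ), 2 * (a k * a j))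
          = ∑' (k : ℕ), 2 * ∑' (j : ℕ), a k * a j :=
            tsum_congr fun k => ENNReal.tsum_mul_left
        _ = 2 * ∑' (k : ℕ), ∑' (j : ℕ), a k * a j := ENNReal.tsum_mul_left
        _ = 8 := by rw [hDD]; norm_num
    have hsym : X = ∑' k, ∑' j, (a k * a j) * ENNReal.ofReal (σf j / σf k) := by
      rw [hXdef, ENNReal.tsum_comm]
      exact tsum_congr fun j => tsum_congr fun k => by ring
    have h2X : X + X = 8 + W := by
      nth_rewrite 2 [hsym]
      rw [hXdef, ← ENNReal.tsum_add]
      have hstep : ∀ k : ℕ,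
          ((∑' j, (a k * a j) * ENNReal.ofReal (σf k / σf j)) +
            ∑' j, (a k * a j) * ENNReal.ofReal (σf j / σf k))
          = (∑' j, 2 * (a k * a j)) + ∑' j, (a k * a j) *
              (if σf k ≠ σf j then
                ENNReal.ofReal ((σf k - σf j) ^ 2 / (σf k * σf j)) else 0) := by
        intro k
        rw [← ENNReal.tsum_add, ← ENNReal.tsum_add]
        refine tsum_congr fun j => ?_
        rw [← mul_add, hofr k j, mul_add]
        congr 1
        ring
      rw [tsum_congr hstep, ENNReal.tsum_add, h8, hWdef]
    -- identify the statement's double sum with W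
    have hinner : ∀ v : ℝ,
        (∑' ξ : (Set.range σf),
          if v ≠ (ξ : ℝ) then volume {x ∈ I | μ x = (ξ : ℝ)} *
            ENNReal.ofReal ((v - (ξ : ℝ)) ^ 2 / (v * (ξ : ℝ))) else 0)
        = ∑' j, a j * (if v ≠ σf j then
            ENNReal.ofReal ((v - σf j) ^ 2 / (v * σf j)) else 0) := by
      intro v
      have hstep : ∀ ξ : (Set.range σf),
          (if v ≠ (ξ : ℝ) then volume {x ∈ I | μ x = (ξ : ℝ)} *
            ENNReal.ofReal ((v - (ξ : ℝ)) ^ 2 / (v * (ξ : ℝ))) else 0)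
          = (∑' k, if σf k = (ξ : ℝ) then a k else 0) *
            (if v ≠ (ξ : ℝ) then
              ENNReal.ofReal ((v - (ξ : ℝ)) ^ 2 / (v * (ξ : ℝ))) else 0) := by
        intro ξ
        rw [hvol (ξ : ℝ)]
        split_ifs with h
        · rfl
        · simp
      rw [tsum_congr hstep]
      exact tsum_range_key σf a
        (fun x => if v ≠ x then ENNReal.ofReal ((v - x) ^ 2 / (v * x)) else 0)
    have hRW : (∑' σ : (Set.range σf), ∑' ξ : (Set.range σf),
        if (σ : ℝ) ≠ (ξ : ℝ) then
          volume {x ∈ I | μ x = (σ : ℝ)} * volume {x ∈ I | μ x = (ξ : ℝ)} *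
            ENNReal.ofReal (((σ : ℝ) - (ξ : ℝ)) ^ 2 / ((σ : ℝ) * (ξ : ℝ)))
        else 0) = W := by
      have hstepo : ∀ σ : (Set.range σf),
          (∑' ξ : (Set.range σf),
            if (σ : ℝ) ≠ (ξ : ℝ) then
              volume {x ∈ I | μ x = (σ : ℝ)} * volume {x ∈ I | μ x = (ξ : ℝ)} *
                ENNReal.ofReal (((σ : ℝ) - (ξ : ℝ)) ^ 2 / ((σ : ℝ) * (ξ : ℝ)))
            else 0)
          = (∑' k, if σf k = (σ : ℝ) then a k else 0) *
            (∑' j, a j * (if (σ : ℝ) ≠ σf j then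
              ENNReal.ofReal (((σ : ℝ) - σf j) ^ 2 / ((σ : ℝ) * σf j)) else 0)) := by
        intro σ
        rw [← hinner (σ : ℝ), ← hvol (σ : ℝ), ← ENNReal.tsum_mul_left]
        refine tsum_congr fun ξ => ?_
        split_ifs with h
        · ring
        · simp
      rw [tsum_congr hstepo,
        tsum_range_key σf a (fun v => ∑' j, a j * (if v ≠ σf j then
          ENNReal.ofReal ((v - σf j) ^ 2 / (v * σf j)) else 0)), hWdef]
      refine tsum_congr fun k => ?_
      rw [← ENNReal.tsum_mul_left]
      exact tsum_congr fun j => by ring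
    -- put everything together
    rw [hint1, hint2, hprod, hRW]
    have h2 : (2 : ℝ≥0∞) * X = 2 * (4 + (1 / 2 : ℝ≥0∞) * W) := by
      rw [two_mul, h2X, mul_add, ← mul_assoc]
      congr 1
      · norm_num
      · rw [show (2 : ℝ≥0∞) * (1 / 2) = 1 by
          rw [one_div, ENNReal.mul_inv_cancel two_ne_zero ENNReal.ofNat_ne_top]]
        rw [one_mul]
    exact (ENNReal.mul_right_inj two_ne_zero ENNReal.ofNat_ne_top).mp h2
  constructor
  · intro n
    rw [main n]
    exact le_self_add
  · rw [← ENNReal.tsum_mul_left]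
    refine tsum_congr fun n => ?_
    rw [main n, ENNReal.add_sub_cancel_left (by norm_num)]
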